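/- Let K be a field of characteristic zero, a, a' ∈ lie_m^m arbitrary tuples, b, b' ∈ lie_n^n tuples such that D_b and D_{b'} are special, and 1 ≤ i ≤ m. Define c ∈ lie_m^m by c_k := [a_k, a'_k] + D_a(a'_k) − D_{a'}(a_k) and d ∈ lie_n^n by d_k := [b_k, b'_k] + D_b(b'_k) − D_{b'}(b_k). Then ⁅D_{a∘_ib}, D_{a'∘_ib'}⁆ = D_{c∘_id} as derivations of lie_{m+n−1}; that is, the partial composition of tangential derivations with special derivations is a Lie algebra homomorphism. -/

import Mathlib

open FreeLieAlgebra

variable (K : Type) [Field K] [CharZero K]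

/-- The free Lie algebra over `K` on `N` generators `x_1, …, x_N`
(indexed here 0-based by `Fin N`). -/
abbrev lieF (N : ℕ) : Type := FreeLieAlgebra K (Fin N)

/-- The `(k+1)`-st generator of `lieF K N` (0-based index `k`), junk value `0` out of range. -/
noncomputable def xg (N k : ℕ) : lieF K N :=
  if h : k < N then FreeLieAlgebra.of K (⟨k, h⟩ : Fin N) else 0

/-- The Lie algebra homomorphism `Φ_i : lie_m → lie_{m+n-1}` sending (0-based) `x_j ↦ x_j`
for `j < i`, `x_i ↦ x_i + x_{i+1} + ⋯ + x_{i+n-1}`, and `x_j ↦ x_{j+n-1}` for `j > i`. -/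
noncomputable def PhiL (m n i : ℕ) : lieF K m →ₗ⁅K⁆ lieF K (m + n - 1) :=
  FreeLieAlgebra.lift K fun j : Fin m =>
    if (j : ℕ) < i then xg K (m + n - 1) (j : ℕ)
    else if (j : ℕ) = i then ∑ t : Fin n, xg K (m + n - 1) (i + (t : ℕ))
    else xg K (m + n - 1) ((j : ℕ) + n - 1)

/-- The Lie algebra homomorphism `Ψ_i : lie_n → lie_{m+n-1}` sending (0-based)
`x_j ↦ x_{i+j}`. -/
noncomputable def PsiL (m n i : ℕ) : lieF K n →ₗ⁅K⁆ lieF K (m + n - 1) :=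
  FreeLieAlgebra.lift K fun j : Fin n => xg K (m + n - 1) (i + (j : ℕ))

/-- The partial composition `f ∘_i g := Φ_i(f) + Ψ_i(g)` of free Lie algebra elements
(the pivot `i` is 0-based). -/
noncomputable def compL {m n : ℕ} (f : lieF K m) (i : ℕ) (g : lieF K n) :
    lieF K (m + n - 1) :=
  PhiL K m n i f + PsiL K m n i g

/-- The canonical identification `lie_N ≅ lie_{N'}` for `N = N'`. -/
noncomputable def recastL {N N' : ℕ} (hNN : N = N') : lieF K N →ₗ⁅K⁆ lieF K N' :=
  FreeLieAlgebra.lift K fun j => FreeLieAlgebra.of K (Fin.cast hNN j)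

/-- The Lie algebra of derivations of `lie_N`. -/
abbrev DerL (N : ℕ) : Type := LieDerivation K (lieF K N) (lieF K N)

/-- Entry of a tuple at a natural-number index (junk value `0` out of range). -/
noncomputable def tget {N : ℕ} (a : Fin N → lieF K N) (k : ℕ) : lieF K N :=
  if h : k < N then a ⟨k, h⟩ else 0

/-- The composed tuple `a ∘_i b ∈ (lie_{m+n-1})^{m+n-1}` (0-based indices): its entries are
`Φ_i(a_j)` in slot `j` for `j < i`, `Φ_i(a_i) + Ψ_i(b_k)` in slot `i+k` for `0 ≤ k < n`,
and `Φ_i(a_j)` in slot `j+n-1` for `j > i`. -/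
noncomputable def compTup {m n : ℕ} (a : Fin m → lieF K m) (i : ℕ)
    (b : Fin n → lieF K n) : Fin (m + n - 1) → lieF K (m + n - 1) := fun k =>
  if (k : ℕ) < i then PhiL K m n i (tget K a (k : ℕ))
  else if (k : ℕ) < i + n then
    PhiL K m n i (tget K a i) + PsiL K m n i (tget K b ((k : ℕ) - i))
  else PhiL K m n i (tget K a ((k : ℕ) + 1 - n))

section Aux

variable {K}

private lemma spanTop (X : Type) :
    LieSubalgebra.lieSpan K (FreeLieAlgebra K X) (Set.range (FreeLieAlgebra.of K)) = ⊤ := by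
  set S := LieSubalgebra.lieSpan K (FreeLieAlgebra K X) (Set.range (FreeLieAlgebra.of K)) with hS
  refine eq_top_iff.mpr fun x _ => ?_
  let f : FreeLieAlgebra K X →ₗ⁅K⁆ S := FreeLieAlgebra.lift K fun j =>
    ⟨FreeLieAlgebra.of K j, LieSubalgebra.subset_lieSpan (Set.mem_range_self j)⟩
  have hcomp : S.incl.comp f = LieHom.id := FreeLieAlgebra.hom_ext fun j => by
    simp [f, FreeLieAlgebra.lift_of_apply, LieHom.comp_apply]
  have hx : S.incl (f x) = x := by
    have := congrArg (fun F : FreeLieAlgebra K X →ₗ⁅K⁆ FreeLieAlgebra K X => F x) hcomp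
    simpa [LieHom.comp_apply] using this
  rw [← hx]; exact (f x).2

private lemma freeInd {X : Type} {p : FreeLieAlgebra K X → Prop}
    (mem : ∀ j, p (FreeLieAlgebra.of K j)) (zero : p 0)
    (smul : ∀ (t : K) (x), p x → p (t • x))
    (add : ∀ x y, p x → p y → p (x + y))
    (lie : ∀ x y, p x → p y → p ⁅x, y⁆) (x : FreeLieAlgebra K X) : p x := by
  have hx : x ∈ LieSubalgebra.lieSpan K (FreeLieAlgebra K X) (Set.range (FreeLieAlgebra.of K)) := by
    rw [spanTop X]; trivial
  exact LieSubalgebra.lieSpan_induction K (p := fun x _ => p x) (by rintro _ ⟨j, rfl⟩; exact mem j) zero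
    (fun x y _ _ => add x y) (fun r x _ h => smul r x h) (fun x y _ _ => lie x y) hx

private lemma derExt {X : Type}
    {D1 D2 : LieDerivation K (FreeLieAlgebra K X) (FreeLieAlgebra K X)}
    (h : ∀ j, D1 (FreeLieAlgebra.of K j) = D2 (FreeLieAlgebra.of K j)) : D1 = D2 :=
  LieDerivation.ext_of_lieSpan_eq_top _ (spanTop X) (by rintro _ ⟨j, rfl⟩; exact h j)

end Aux

private lemma mysum_lie {L : Type} [LieRing L] [LieAlgebra K L] {ι : Type}
    (s : Finset ι) (f : ι → L) (A : L) :
    ∑ t ∈ s, ⁅f t, A⁆ = ⁅∑ t ∈ s, f t, A⁆ := by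
  induction s using Finset.cons_induction with
  | empty => simp
  | cons a s ha ih => simp [Finset.sum_cons, ih, add_lie]

private lemma lieHom_sum {L L' : Type} [LieRing L] [LieAlgebra K L] [LieRing L']
    [LieAlgebra K L'] (F : L →ₗ⁅K⁆ L') {ι : Type} (s : Finset ι) (f : ι → L) :
    F (∑ t ∈ s, f t) = ∑ t ∈ s, F (f t) :=
  map_sum F.toLinearMap f s

private lemma der_sum {L : Type} [LieRing L] [LieAlgebra K L]
    (D : LieDerivation K L L) {ι : Type} (s : Finset ι) (f : ι → L) :
    D (∑ t ∈ s, f t) = ∑ t ∈ s, D (f t) :=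
  map_sum D.toLinearMap f s

private lemma PhiL_of (m n i : ℕ) (j : Fin m) :
    PhiL K m n i (FreeLieAlgebra.of K j) =
      if (j : ℕ) < i then xg K (m + n - 1) (j : ℕ)
      else if (j : ℕ) = i then ∑ t : Fin n, xg K (m + n - 1) (i + (t : ℕ))
      else xg K (m + n - 1) ((j : ℕ) + n - 1) := by
  simp [PhiL, FreeLieAlgebra.lift_of_apply]

private lemma PsiL_of (m n i : ℕ) (j : Fin n) :
    PsiL K m n i (FreeLieAlgebra.of K j) = xg K (m + n - 1) (i + (j : ℕ)) := by
  simp [PsiL, FreeLieAlgebra.lift_of_apply]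

private lemma U_Phi (m n : ℕ) (hn : 1 ≤ n) (i : ℕ) (hi : i < m)
    (a : Fin m → lieF K m) (b : Fin n → lieF K n)
    (Da : DerL K m)
    (hDa : ∀ k : Fin m, Da (FreeLieAlgebra.of K k) = ⁅FreeLieAlgebra.of K k, a k⁆)
    (Db : DerL K n)
    (hDb : ∀ k : Fin n, Db (FreeLieAlgebra.of K k) = ⁅FreeLieAlgebra.of K k, b k⁆)
    (hDbs : Db (∑ k : Fin n, FreeLieAlgebra.of K k) = 0)
    (U : DerL K (m + n - 1))
    (hU : ∀ k : Fin (m + n - 1),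
      U (FreeLieAlgebra.of K k) = ⁅FreeLieAlgebra.of K k, compTup K a i b k⁆)
    (f : lieF K m) : U (PhiL K m n i f) = PhiL K m n i (Da f) := by
  induction f using freeInd with
  | zero => simp
  | smul t x hx => simp [hx]
  | add x y hx hy => simp [hx, hy]
  | lie x y hx hy =>
      simp [LieDerivation.apply_lie_eq_add, hx, hy]
  | mem j =>
      rcases lt_trichotomy (j : ℕ) i with hj | hj | hj
      · have hjM : (j : ℕ) < m + n - 1 := by omega
        have hxg : xg K (m + n - 1) (j : ℕ) = FreeLieAlgebra.of K ⟨j, hjM⟩ := by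
          simp [xg, hjM]
        have hct : compTup K a i b ⟨j, hjM⟩ = PhiL K m n i (a j) := by
          simp [compTup, hj, tget, j.isLt]
        rw [hDa, LieHom.map_lie, PhiL_of, if_pos hj, hxg, hU ⟨j, hjM⟩, hct]
      · have hjfin : j = ⟨i, hi⟩ := Fin.ext hj
        have hit : ∀ t : Fin n, i + (t : ℕ) < m + n - 1 := fun t => by
          have := t.isLt; omega
        have hxg : ∀ t : Fin n, xg K (m + n - 1) (i + (t : ℕ)) =
            FreeLieAlgebra.of K (⟨i + (t : ℕ), hit t⟩ : Fin (m + n - 1)) := fun t => by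
          simp [xg, hit t]
        have hct : ∀ t : Fin n, compTup K a i b ⟨i + (t : ℕ), hit t⟩ =
            PhiL K m n i (a ⟨i, hi⟩) + PsiL K m n i (b t) := fun t => by
          have h1 : ¬ (i + (t : ℕ) < i) := by omega
          have h2 : i + (t : ℕ) < i + n := by have := t.isLt; omega
          simp [compTup, h1, h2, tget, hi, t.isLt]
        have hsum : ∑ t : Fin n, (⁅FreeLieAlgebra.of K (⟨i + (t : ℕ), hit t⟩ : Fin (m+n-1)),
            PsiL K m n i (b t)⁆) = 0 := by
          have : ∀ t : Fin n, ⁅FreeLieAlgebra.of K (⟨i + (t : ℕ), hit t⟩ : Fin (m+n-1)),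
              PsiL K m n i (b t)⁆ = PsiL K m n i (Db (FreeLieAlgebra.of K t)) := fun t => by
            rw [hDb, LieHom.map_lie, PsiL_of, hxg t]
          rw [Finset.sum_congr rfl fun t _ => this t, ← lieHom_sum K, ← der_sum K, hDbs]
          simp
        rw [PhiL_of, if_neg (by omega), if_pos hj]
        rw [Finset.sum_congr rfl fun t _ => hxg t, der_sum K]
        rw [Finset.sum_congr rfl fun (t : Fin n) _ => hU ⟨i + (t : ℕ), hit t⟩]
        rw [Finset.sum_congr rfl fun (t : Fin n) _ => congrArg _ (hct t)]
        simp only [lie_add, Finset.sum_add_distrib, hsum, add_zero]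
        rw [mysum_lie K]
        rw [hDa, LieHom.map_lie, PhiL_of, if_neg (by omega), if_pos hj, hjfin]
        rw [Finset.sum_congr rfl fun t _ => hxg t]
      · have hjM : (j : ℕ) + n - 1 < m + n - 1 := by have := j.isLt; omega
        have hxg : xg K (m + n - 1) ((j : ℕ) + n - 1) = FreeLieAlgebra.of K ⟨(j:ℕ) + n - 1, hjM⟩ := by
          simp [xg, hjM]
        have hct : compTup K a i b ⟨(j:ℕ) + n - 1, hjM⟩ = PhiL K m n i (a j) := by
          have h1 : ¬ ((j:ℕ) + n - 1 < i) := by omega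
          have h2 : ¬ ((j:ℕ) + n - 1 < i + n) := by omega
          have h3 : (j:ℕ) + n - 1 + 1 - n = (j:ℕ) := by omega
          simp [compTup, h1, h2, h3, tget, j.isLt]
        rw [hDa, LieHom.map_lie, PhiL_of, if_neg (by omega), if_neg (by omega), hxg,
          hU ⟨(j:ℕ) + n - 1, hjM⟩, hct]

private lemma U_Psi (m n : ℕ) (hn : 1 ≤ n) (i : ℕ) (hi : i < m)
    (a : Fin m → lieF K m) (b : Fin n → lieF K n)
    (Db : DerL K n)
    (hDb : ∀ k : Fin n, Db (FreeLieAlgebra.of K k) = ⁅FreeLieAlgebra.of K k, b k⁆)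
    (U : DerL K (m + n - 1))
    (hU : ∀ k : Fin (m + n - 1),
      U (FreeLieAlgebra.of K k) = ⁅FreeLieAlgebra.of K k, compTup K a i b k⁆)
    (g : lieF K n) : U (PsiL K m n i g) =
      PsiL K m n i (Db g) + ⁅PsiL K m n i g, PhiL K m n i (a ⟨i, hi⟩)⁆ := by
  induction g using freeInd with
  | zero => simp
  | smul t x hx => simp [hx, smul_add, smul_lie]
  | add x y hx hy =>
      simp only [map_add, map_add, hx, hy, add_lie]
      abel
  | lie x y hx hy =>
      simp only [LieHom.map_lie, LieDerivation.apply_lie_eq_add, map_add, hx, hy]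
      set p := PsiL K m n i x
      set q := PsiL K m n i y
      set A := PhiL K m n i (a ⟨i, hi⟩)
      set u := PsiL K m n i (Db x)
      set v := PsiL K m n i (Db y)
      have jac : ⁅⁅p, q⁆, A⁆ = ⁅⁅p, A⁆, q⁆ + ⁅p, ⁅q, A⁆⁆ := by
        rw [lie_lie, ← lie_skew ⁅p, A⁆ q]
        abel
      rw [jac]
      simp only [add_lie, lie_add]
      abel
  | mem t =>
      have hit : i + (t : ℕ) < m + n - 1 := by have := t.isLt; omega
      have hxg : xg K (m + n - 1) (i + (t : ℕ)) =
          FreeLieAlgebra.of K (⟨i + (t : ℕ), hit⟩ : Fin (m + n - 1)) := by simp [xg, hit]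
      have hct : compTup K a i b ⟨i + (t : ℕ), hit⟩ =
          PhiL K m n i (a ⟨i, hi⟩) + PsiL K m n i (b t) := by
        have h1 : ¬ (i + (t : ℕ) < i) := by omega
        have h2 : i + (t : ℕ) < i + n := by have := t.isLt; omega
        simp [compTup, h1, h2, tget, hi, t.isLt]
      rw [PsiL_of, hxg, hU ⟨i + (t : ℕ), hit⟩, hct, hDb, LieHom.map_lie, PsiL_of, hxg]
      simp only [lie_add]
      abel

/-- The partial composition of tangential derivations with special derivations is a Lie
algebra homomorphism: with `c_k := [a_k, a'_k] + D_a(a'_k) - D_{a'}(a_k)` and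
`d_k := [b_k, b'_k] + D_b(b'_k) - D_{b'}(b_k)`, one has
`⁅D_{a∘_ib}, D_{a'∘_ib'}⁆ = D_{c∘_id}` as derivations of `lie_{m+n-1}`
(indices 0-based; `D_b`, `D_{b'}` are assumed special). -/
theorem comp_is_lie_hom (m n : ℕ) (hn : 1 ≤ n) (i : ℕ) (hi : i < m)
    (a a' : Fin m → lieF K m) (b b' : Fin n → lieF K n)
    (Da Da' : DerL K m)
    (hDa : ∀ k : Fin m, Da (FreeLieAlgebra.of K k) = ⁅FreeLieAlgebra.of K k, a k⁆)
    (hDa' : ∀ k : Fin m, Da' (FreeLieAlgebra.of K k) = ⁅FreeLieAlgebra.of K k, a' k⁆)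
    (Db Db' : DerL K n)
    (hDb : ∀ k : Fin n, Db (FreeLieAlgebra.of K k) = ⁅FreeLieAlgebra.of K k, b k⁆)
    (hDb' : ∀ k : Fin n, Db' (FreeLieAlgebra.of K k) = ⁅FreeLieAlgebra.of K k, b' k⁆)
    (hDbs : Db (∑ k : Fin n, FreeLieAlgebra.of K k) = 0)
    (hDb's : Db' (∑ k : Fin n, FreeLieAlgebra.of K k) = 0)
    (U U' W : DerL K (m + n - 1))
    (hU : ∀ k : Fin (m + n - 1),
      U (FreeLieAlgebra.of K k) = ⁅FreeLieAlgebra.of K k, compTup K a i b k⁆)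
    (hU' : ∀ k : Fin (m + n - 1),
      U' (FreeLieAlgebra.of K k) = ⁅FreeLieAlgebra.of K k, compTup K a' i b' k⁆)
    (hW : ∀ k : Fin (m + n - 1),
      W (FreeLieAlgebra.of K k) =
        ⁅FreeLieAlgebra.of K k,
          compTup K (fun s => ⁅a s, a' s⁆ + Da (a' s) - Da' (a s)) i
            (fun s => ⁅b s, b' s⁆ + Db (b' s) - Db' (b s)) k⁆) :
    ⁅U, U'⁆ = W := by
  set ctup : Fin m → lieF K m := fun s => ⁅a s, a' s⁆ + Da (a' s) - Da' (a s) with hctup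
  set dtup : Fin n → lieF K n := fun s => ⁅b s, b' s⁆ + Db (b' s) - Db' (b s) with hdtup
  apply derExt
  intro k
  rw [hW k, LieDerivation.commutator_apply, hU k, hU' k,
    LieDerivation.apply_lie_eq_add, LieDerivation.apply_lie_eq_add, hU k, hU' k]
  set c := compTup K a i b k with hc
  set c' := compTup K a' i b' k with hc'
  have key : compTup K ctup i dtup k = ⁅c, c'⁆ + U c' - U' c := by
    rcases lt_or_ge (k : ℕ) i with hk | hk
    · have hkm : (k : ℕ) < m := by omega
      have e1 : c = PhiL K m n i (a ⟨k, hkm⟩) := by simp [hc, compTup, hk, tget, hkm]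
      have e2 : c' = PhiL K m n i (a' ⟨k, hkm⟩) := by simp [hc', compTup, hk, tget, hkm]
      have e3 : compTup K ctup i dtup k = PhiL K m n i (ctup ⟨k, hkm⟩) := by
        simp [compTup, hk, tget, hkm]
      rw [e1, e2, e3, hctup]
      rw [U_Phi K m n hn i hi a b Da hDa Db hDb hDbs U hU,
        U_Phi K m n hn i hi a' b' Da' hDa' Db' hDb' hDb's U' hU']
      simp only [map_add, map_sub, LieHom.map_lie]
    · rcases lt_or_ge (k : ℕ) (i + n) with hk2 | hk2
      · have hs : (k : ℕ) - i < n := by omega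
        have e1 : c = PhiL K m n i (a ⟨i, hi⟩) + PsiL K m n i (b ⟨(k:ℕ) - i, hs⟩) := by
          simp [hc, compTup, not_lt.mpr hk, hk2, tget, hi, hs]
        have e2 : c' = PhiL K m n i (a' ⟨i, hi⟩) + PsiL K m n i (b' ⟨(k:ℕ) - i, hs⟩) := by
          simp [hc', compTup, not_lt.mpr hk, hk2, tget, hi, hs]
        have e3 : compTup K ctup i dtup k =
            PhiL K m n i (ctup ⟨i, hi⟩) + PsiL K m n i (dtup ⟨(k:ℕ) - i, hs⟩) := by
          simp [compTup, not_lt.mpr hk, hk2, tget, hi, hs]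
        rw [e1, e2, e3, hctup, hdtup]
        rw [map_add U, map_add U',
          U_Phi K m n hn i hi a b Da hDa Db hDb hDbs U hU,
          U_Phi K m n hn i hi a' b' Da' hDa' Db' hDb' hDb's U' hU',
          U_Psi K m n hn i hi a b Db hDb U hU,
          U_Psi K m n hn i hi a' b' Db' hDb' U' hU']
        simp only [map_add, map_sub, LieHom.map_lie, add_lie, lie_add]
        set P := PhiL K m n i (a ⟨i, hi⟩)
        set P' := PhiL K m n i (a' ⟨i, hi⟩)
        set Q := PsiL K m n i (b ⟨(k:ℕ) - i, hs⟩)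
        set Q' := PsiL K m n i (b' ⟨(k:ℕ) - i, hs⟩)
        have h1 : ⁅Q', P⁆ = -⁅P, Q'⁆ := by rw [← lie_skew]
        have h2 : ⁅Q, P'⁆ = -⁅P', Q⁆ := by rw [← lie_skew]
        rw [h1, h2]
        abel
      · have hkm : (k : ℕ) + 1 - n < m := by have := k.isLt; omega
        have e1 : c = PhiL K m n i (a ⟨(k:ℕ) + 1 - n, hkm⟩) := by
          simp [hc, compTup, not_lt.mpr hk, not_lt.mpr hk2, tget, hkm]
        have e2 : c' = PhiL K m n i (a' ⟨(k:ℕ) + 1 - n, hkm⟩) := by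
          simp [hc', compTup, not_lt.mpr hk, not_lt.mpr hk2, tget, hkm]
        have e3 : compTup K ctup i dtup k = PhiL K m n i (ctup ⟨(k:ℕ) + 1 - n, hkm⟩) := by
          simp [compTup, not_lt.mpr hk, not_lt.mpr hk2, tget, hkm]
        rw [e1, e2, e3, hctup]
        rw [U_Phi K m n hn i hi a b Da hDa Db hDb hDbs U hU,
          U_Phi K m n hn i hi a' b' Da' hDa' Db' hDb' hDb's U' hU']
        simp only [map_add, map_sub, LieHom.map_lie]
  rw [key]
  set X := FreeLieAlgebra.of K k
  have jac : ⁅X, ⁅c, c'⁆⁆ = ⁅⁅X, c⁆, c'⁆ - ⁅⁅X, c'⁆, c⁆ := by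
    rw [leibniz_lie, ← lie_skew ⁅X, c'⁆ c]
    abel
  simp only [lie_add, lie_sub, jac]
  abel
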